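/- arXiv:1705.04851 — 2 statements merged into one kernel-verified Lean document; each statement's English description precedes it below -/
import Mathlib

section
/- Let (X,d,μ) be a metric measure space with a Radon measure μ satisfying the doubling condition μ(B(x,2r)) ≤ K·μ(B(x,r)) for all x ∈ X and r > 0, where 0 < μ(B(x,r)) < ∞ for all x and r. Then for every natural number i, every natural number k with k ≤ 2^i, and every x ∈ X, there exists a radius r with 2^i ≤ r < 2^{i+1} such that μ(B(x, r+k) \ B(x, r)) ≤ C·k·μ(B(x, r))/r, where C is a constant depending only on the doubling constant K. -/
open MeasureTheory Metric ENNReal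

/-- Lemma 6.7 of the paper: in a doubling metric measure space, for each scale `2^i`
and each `k ≤ 2^i` one can find a radius `r ∈ [2^i, 2^(i+1))` whose annulus of width `k`
has small relative measure, with constant `C = 4 K ^ 2` depending only on the doubling
constant `K`. -/
theorem stmt0
    (X : Type*) [MetricSpace X] [MeasurableSpace X] [BorelSpace X]
    (μ : Measure X) (K : ℝ≥0∞)
    (hdoubling : ∀ (x : X) (r : ℝ), 0 < r → μ (closedBall x (2 * r)) ≤ K * μ (closedBall x r))
    (hpos : ∀ (x : X) (r : ℝ), 0 < r → 0 < μ (closedBall x r))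
    (hfin : ∀ (x : X) (r : ℝ), 0 < r → μ (closedBall x r) < ∞) :
    ∀ (i k : ℕ), k ≤ 2 ^ i → ∀ x : X,
      ∃ r : ℝ, (2 : ℝ) ^ i ≤ r ∧ r < 2 ^ (i + 1) ∧
        μ (closedBall x (r + k) \ closedBall x r)
          ≤ 4 * K ^ 2 * k * μ (closedBall x r) / ENNReal.ofReal r := by
  intro i k hk x
  have h2i : (0:ℝ) < 2 ^ i := by positivity
  have h2i1 : (2:ℝ) ^ i < 2 ^ (i + 1) := by
    rw [pow_succ]; nlinarith
  rcases Nat.eq_zero_or_pos k with hk0 | hkpos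
  · subst hk0
    refine ⟨2 ^ i, le_rfl, h2i1, ?_⟩
    simp
  -- main case : k ≥ 1
  set a : ℝ := 2 ^ i with ha
  set m : ℕ := 2 ^ i / k with hm
  have hm1 : 1 ≤ m := (Nat.one_le_div_iff hkpos).2 hk
  have hmk : m * k ≤ 2 ^ i := by
    rw [hm]; exact Nat.div_mul_le_self _ _
  have hlt : 2 ^ i < (m + 1) * k := by
    have hmod := Nat.div_add_mod (2 ^ i) k
    have hmod2 := Nat.mod_lt (2 ^ i) hkpos
    rw [← hm] at hmod
    nlinarith [hmod, hmod2]
  -- the annuli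
  set A : ℕ → Set X := fun j => closedBall x (a + (j + 1) * k) \ closedBall x (a + j * k)
    with hA
  have hmeas : ∀ j ∈ Finset.range m, MeasurableSet (A j) := fun j _ =>
    measurableSet_closedBall.diff measurableSet_closedBall
  have hsub : ∀ j ∈ Finset.range m, A j ⊆ closedBall x (2 * a) := by
    intro j hj
    have hjm : j < m := Finset.mem_range.1 hj
    refine Set.Subset.trans Set.diff_subset (closedBall_subset_closedBall ?_)
    have : ((j : ℝ) + 1) * k ≤ (m : ℝ) * k := by
      have : (j : ℝ) + 1 ≤ m := by exact_mod_cast hjm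
      have hk0' : (0:ℝ) ≤ k := by positivity
      nlinarith
    have hmk' : (m : ℝ) * k ≤ 2 ^ i := by exact_mod_cast hmk
    rw [ha]; nlinarith
  have hdisj : (↑(Finset.range m) : Set ℕ).PairwiseDisjoint A := by
    have hd : ∀ j j' : ℕ, j < j' → Disjoint (A j) (A j') := by
      intro j j' hjj
      refine Set.disjoint_left.2 fun y hy hy' => ?_
      have h1 : y ∈ closedBall x (a + (j + 1) * k) := hy.1
      have h2 : y ∉ closedBall x (a + j' * k) := hy'.2
      refine h2 (closedBall_subset_closedBall ?_ h1)
      have : ((j : ℝ) + 1) ≤ j' := by exact_mod_cast hjj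
      have hk0' : (0:ℝ) ≤ k := by positivity
      nlinarith
    intro j _ j' _ hne
    rcases hne.lt_or_gt with h | h
    · exact hd _ _ h
    · exact (hd _ _ h).symm
  have hsum : ∑ j ∈ Finset.range m, μ (A j) ≤ μ (closedBall x (2 * a)) := by
    rw [← measure_biUnion_finset hdisj hmeas]
    exact measure_mono (Set.iUnion₂_subset hsub)
  have h2a : (0:ℝ) < 2 * a := by rw [ha]; positivity
  have B2fin : μ (closedBall x (2 * a)) < ∞ := hfin x _ h2a
  have hm0 : (m : ℝ≥0∞) ≠ 0 := by
    simp only [ne_eq, Nat.cast_eq_zero]; omega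
  have hmT : (m : ℝ≥0∞) ≠ ∞ := natCast_ne_top m
  -- pigeonhole
  have key : ∃ j, j < m ∧ μ (A j) * m ≤ μ (closedBall x (2 * a)) := by
    by_contra h
    push_neg at h
    have hlt' : ∀ j ∈ Finset.range m, μ (closedBall x (2 * a)) / m < μ (A j) := by
      intro j hj
      exact ENNReal.div_lt_of_lt_mul (h j (Finset.mem_range.1 hj))
    have hne : (Finset.range m).Nonempty := ⟨0, Finset.mem_range.2 (by omega)⟩
    have hbig := ENNReal.sum_lt_sum_of_nonempty hne hlt'
    rw [Finset.sum_const, Finset.card_range, nsmul_eq_mul,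
      ENNReal.mul_div_cancel hm0 hmT] at hbig
    exact absurd (hbig.trans_le hsum) (lt_irrefl _)
  obtain ⟨j, hjm, hAj⟩ := key
  refine ⟨a + j * k, le_add_of_nonneg_right (by positivity), ?_, ?_⟩
  · -- a + j*k < 2^(i+1)
    have hjk : ((j : ℝ) + 1) * k ≤ (m : ℝ) * k := by
      have : (j : ℝ) + 1 ≤ m := by exact_mod_cast hjm
      have hk0' : (0:ℝ) ≤ k := by positivity
      nlinarith
    have hmk' : (m : ℝ) * k ≤ 2 ^ i := by exact_mod_cast hmk
    have hkpos' : (0:ℝ) < k := by exact_mod_cast hkpos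
    rw [pow_succ, ha] at *
    nlinarith
  · set r : ℝ := a + j * k with hr
    have hrpos : 0 < r := by rw [hr, ha]; positivity
    have hra : a ≤ r := le_add_of_nonneg_right (by positivity)
    have hrfin : ENNReal.ofReal r ≠ ∞ := ofReal_ne_top
    have hr0 : ENNReal.ofReal r ≠ 0 := by
      simp [ENNReal.ofReal_eq_zero, not_le, hrpos]
    have hAeq : closedBall x (r + k) \ closedBall x r = A j := by
      rw [hA, hr]; ring_nf
    rw [hAeq]
    -- μ (A j) ≤ μ B2 / m ≤ K * μ (ball r) / m
    have step1 : μ (A j) ≤ μ (closedBall x (2 * a)) / m :=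
      (ENNReal.le_div_iff_mul_le (Or.inl hm0) (Or.inl hmT)).2 hAj
    have step2 : μ (closedBall x (2 * a)) ≤ K * μ (closedBall x r) := by
      calc μ (closedBall x (2 * a)) ≤ K * μ (closedBall x a) := hdoubling x a h2i
        _ ≤ K * μ (closedBall x r) := by gcongr
    have step3 : μ (A j) ≤ K * μ (closedBall x r) / m :=
      step1.trans (ENNReal.div_le_div step2 le_rfl)
    refine step3.trans ?_
    -- now pure arithmetic in ℝ≥0∞
    rcases eq_or_ne K ∞ with hK | hK
    · have hμ0 : μ (closedBall x r) ≠ 0 := (hpos x r hrpos).ne'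
      have : 4 * K ^ 2 * k * μ (closedBall x r) / ENNReal.ofReal r = ∞ := by
        have hk0e : (k : ℝ≥0∞) ≠ 0 := by
          simp only [ne_eq, Nat.cast_eq_zero]; omega
        rw [hK, ENNReal.top_pow (by norm_num), ENNReal.mul_top (by norm_num),
          ENNReal.top_mul hk0e, ENNReal.top_mul hμ0, ENNReal.top_div_of_ne_top hrfin]
      rw [this]; exact le_top
    · -- K finite; first K ≥ 1
      have hK1 : 1 ≤ K := by
        by_contra hKlt
        push_neg at hKlt
        have hμ1 : μ (closedBall x 1) ≠ 0 := (hpos x 1 one_pos).ne'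
        have hμ1T : μ (closedBall x 1) ≠ ∞ := (hfin x 1 one_pos).ne
        have h1 : μ (closedBall x 1) ≤ μ (closedBall x (2 * 1)) :=
          measure_mono (closedBall_subset_closedBall (by norm_num))
        have h2 : μ (closedBall x (2 * 1)) ≤ K * μ (closedBall x 1) := hdoubling x 1 one_pos
        have h3 : K * μ (closedBall x 1) < 1 * μ (closedBall x 1) :=
          (ENNReal.mul_lt_mul_iff_left hμ1 hμ1T).2 hKlt
        rw [one_mul] at h3
        exact absurd ((h1.trans h2).trans_lt h3) (lt_irrefl _)
      -- ofReal r ≤ 4 * K * k * m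
      have hrle : ENNReal.ofReal r ≤ 4 * K * k * m := by
        have hr4 : r ≤ 4 * (k * m) := by
          have h1 : (2:ℝ) ^ i < ((m:ℝ) + 1) * k := by exact_mod_cast hlt
          have hjk : (j : ℝ) * k ≤ (m : ℝ) * k := by
            have : (j : ℝ) ≤ m := by exact_mod_cast hjm.le
            have hk0' : (0:ℝ) ≤ k := by positivity
            nlinarith
          have hm1' : (1:ℝ) ≤ m := by exact_mod_cast hm1
          have hkpos' : (1:ℝ) ≤ k := by exact_mod_cast hkpos
          rw [hr, ha]; nlinarith
        calc ENNReal.ofReal r ≤ ENNReal.ofReal (4 * (k * m)) := ENNReal.ofReal_le_ofReal hr4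
          _ = 4 * ((k : ℝ≥0∞) * m) := by
              rw [ENNReal.ofReal_mul (by norm_num), ENNReal.ofReal_mul (by positivity),
                ENNReal.ofReal_natCast, ENNReal.ofReal_natCast]
              norm_num
          _ ≤ 4 * K * k * m := by
              calc 4 * ((k : ℝ≥0∞) * m) = 4 * 1 * k * m := by ring
                _ ≤ 4 * K * k * m := by gcongr
      rw [ENNReal.div_le_iff hm0 hmT, mul_comm (4 * K ^ 2 * ↑k * μ (closedBall x r) / ENNReal.ofReal r) (m : ℝ≥0∞),
        ← mul_div_assoc, ENNReal.le_div_iff_mul_le (Or.inl hr0) (Or.inl hrfin)]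
      calc K * μ (closedBall x r) * ENNReal.ofReal r
          ≤ K * μ (closedBall x r) * (4 * K * k * m) := by gcongr
        _ = (m : ℝ≥0∞) * (4 * K ^ 2 * k * μ (closedBall x r)) := by ring
end

section
/- Let G be a compactly generated locally compact group of polynomial growth with symmetric compact generating set V and Haar measure m, so that m(Vⁿ) ≤ k·n^r for constants k > 0, r ∈ ℕ and all n ≥ 1. Suppose additionally there are constants c₁ > 0 and d ∈ ℕ with m(Vⁿ) ≥ c₁·n^d for all n ≥ 1, and m(Vⁿ) ≤ c₂·n^d. Fix a measurable symmetric density f ≥ 0 on G of integral 1 satisfying the Gaussian lower bound f^{⋆k}(g) ≥ c·e^{−d(e,g)²/k}/m(B_{√k}) for all g ∈ B_k and all integers k ≥ 1, where d is the word metric of V and B_r its balls. Then there exists a constant c' > 0 such that for all sufficiently large integers n, the pointwise inequality χ_{B_n}(g)/m(B_n) ≤ (c'/(2n²)) Σ_{k=1}^{2n²} f^{⋆k}(g) holds for all g ∈ G. -/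
open MeasureTheory ENNReal Filter Pointwise Set

set_option maxHeartbeats 1000000 in
/-- Lemma 4.9 of the paper: on a group of (two-sided) polynomial growth, a symmetric
probability density `f` satisfying the Hebisch–Saloff-Coste Gaussian lower bound dominates
the normalized indicator of the ball `B_n` by the Cesŕro average of its convolution powers,
for all sufficiently large `n`. -/
theorem stmt3
    (G : Type*) [Group G] [TopologicalSpace G] [IsTopologicalGroup G]
    [MeasurableSpace G] [BorelSpace G]
    (m : Measure G) [m.IsMulRightInvariant]
    (V : Set G) (hVsymm : V⁻¹ = V) (hVcpt : IsCompact V) (hVgen : ⋃ n : ℕ, V ^ (n + 1) = univ)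
    -- word metric: `D g` is the word length of `g`, `B r` the closed ball of radius `r`
    (D : G → ℕ) (hD : ∀ g : G, D g = sInf {n : ℕ | g ∈ V ^ n})
    (B : ℝ → Set G) (hB : ∀ r : ℝ, B r = {g : G | (D g : ℝ) ≤ r})
    -- polynomial growth with matching exponents
    (k₀ c₁ c₂ : ℝ) (d : ℕ) (hk₀ : 0 < k₀) (hc₁ : 0 < c₁) (hc₂ : 0 < c₂)
    (hfinB : ∀ n : ℕ, 1 ≤ n → m (V ^ n) < ∞)
    (hupper : ∀ n : ℕ, 1 ≤ n → (m (V ^ n)).toReal ≤ c₂ * (n : ℝ) ^ d)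
    (hlower : ∀ n : ℕ, 1 ≤ n → c₁ * (n : ℝ) ^ d ≤ (m (V ^ n)).toReal)
    (hgrowth : ∀ n : ℕ, 1 ≤ n → (m (V ^ n)).toReal ≤ k₀ * (n : ℝ) ^ d)
    -- the density `f` and its convolution powers
    (f : G → ℝ) (hf0 : ∀ g, 0 ≤ f g) (hfint : ∫ g, f g ∂m = 1)
    (hfsymm : ∀ g, f g⁻¹ = f g)
    (hfsupp : IsCompact (closure {g | f g ≠ 0})) (hVsupp : V ⊆ closure {g | f g ≠ 0})
    (fconv : ℕ → G → ℝ)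
    (hconv1 : fconv 1 = f)
    (hconv : ∀ (k : ℕ) (g : G), fconv (k + 1) g = ∫ h, f h * fconv k (h⁻¹ * g) ∂m)
    -- the Gaussian lower bound of Hebisch–Saloff-Coste
    (c : ℝ) (hc : 0 < c)
    (hgauss : ∀ k : ℕ, 1 ≤ k → ∀ g ∈ B (k : ℝ),
      c * Real.exp (-((D g : ℝ) ^ 2 / (k : ℝ))) / (m (B (Real.sqrt (k : ℝ)))).toReal
        ≤ fconv k g) :
    ∃ c' : ℝ, 0 < c' ∧ ∃ N : ℕ, ∀ n : ℕ, N ≤ n → ∀ g : G,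
      indicator (B (n : ℝ)) (fun _ => (1 : ℝ)) g / (m (B (n : ℝ))).toReal
        ≤ c' / (2 * (n : ℝ) ^ 2) * ∑ k ∈ Finset.Icc 1 (2 * n ^ 2), fconv k g := by

  classical
  -- `V` is nonempty
  have hVne : V.Nonempty := by
    rcases V.eq_empty_or_nonempty with h | h
    · exfalso
      have h1 : (1 : G) ∈ ⋃ n : ℕ, V ^ (n + 1) := hVgen ▸ mem_univ 1
      obtain ⟨_, ⟨n, rfl⟩, hn⟩ := h1
      rw [h] at hn
      simp [Set.empty_pow] at hn
    · exact h
  obtain ⟨v, hv⟩ := hVne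
  have hone2 : (1 : G) ∈ V ^ 2 := by
    have hv' : v⁻¹ ∈ V := by rw [← hVsymm]; exact Set.inv_mem_inv.mpr hv
    have h := Set.mul_mem_mul hv hv'
    rw [mul_inv_cancel] at h
    rwa [sq]
  have hstep : ∀ j : ℕ, V ^ j ⊆ V ^ (j + 2) := by
    intro j g hg
    have h := Set.mul_mem_mul hg hone2
    rw [mul_one] at h
    rwa [pow_add]
  have hpow2 : ∀ (t j : ℕ), V ^ j ⊆ V ^ (j + 2 * t) := by
    intro t
    induction t with
    | zero => simp
    | succ t ih =>
      intro j
      have he : j + 2 * (t + 1) = (j + 2 * t) + 2 := by ring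
      rw [he]
      exact (ih j).trans (hstep _)
  have hmono : ∀ j mm : ℕ, j ≤ mm → V ^ j ⊆ V ^ mm ∪ V ^ (mm + 1) := by
    intro j mm hjm
    rcases Nat.even_or_odd (mm - j) with ⟨t, ht⟩ | ⟨t, ht⟩
    · have he : mm = j + 2 * t := by omega
      rw [he]
      exact (hpow2 t j).trans subset_union_left
    · have he : mm + 1 = j + 2 * (t + 1) := by omega
      rw [he]
      exact (hpow2 (t + 1) j).trans subset_union_right
  have hDmem : ∀ g : G, g ∈ V ^ D g := by
    intro g
    have h1 : g ∈ ⋃ n : ℕ, V ^ (n + 1) := hVgen ▸ mem_univ g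
    obtain ⟨_, ⟨n, rfl⟩, hn⟩ := h1
    have hne : {n : ℕ | g ∈ V ^ n}.Nonempty := ⟨n + 1, hn⟩
    rw [hD]
    exact Nat.sInf_mem hne
  have hDle : ∀ (g : G) (n : ℕ), g ∈ V ^ n → D g ≤ n := by
    intro g n hg
    rw [hD]
    exact Nat.sInf_le hg
  have hBsub : ∀ r : ℝ, B r ⊆ V ^ (⌊r⌋₊) ∪ V ^ (⌊r⌋₊ + 1) := by
    intro r g hg
    rw [hB] at hg
    exact hmono _ _ (Nat.le_floor hg) (hDmem g)
  have hsubB : ∀ (j : ℕ) (r : ℝ), (j : ℝ) ≤ r → V ^ j ⊆ B r := by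
    intro j r hjr g hg
    rw [hB]
    exact le_trans (Nat.cast_le.mpr (hDle g j hg)) hjr
  have hBle : ∀ r : ℝ, m (B r) ≤ m (V ^ ⌊r⌋₊) + m (V ^ (⌊r⌋₊ + 1)) :=
    fun r => (measure_mono (hBsub r)).trans (measure_union_le _ _)
  have hBne : ∀ r : ℝ, 1 ≤ r → m (B r) ≠ ∞ := by
    intro r hr
    have h1 : 1 ≤ ⌊r⌋₊ := Nat.le_floor (by simpa using hr)
    exact ne_top_of_le_ne_top
      (ENNReal.add_ne_top.mpr ⟨(hfinB _ h1).ne, (hfinB _ (by omega)).ne⟩) (hBle r)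
  have hfc : ∀ k : ℕ, 1 ≤ k → ∀ g, 0 ≤ fconv k g := by
    intro k hk
    induction k, hk using Nat.le_induction with
    | base => intro g; rw [hconv1]; exact hf0 g
    | succ k hk ih =>
      intro g
      rw [hconv k g]
      exact integral_nonneg fun h => mul_nonneg (hf0 h) (ih _)
  refine ⟨(4 * 3 ^ d * c₂ * Real.exp 1) / (c * c₁), by positivity, 1, ?_⟩
  intro n hn g
  have hn1 : (1 : ℝ) ≤ (n : ℝ) := by exact_mod_cast hn
  have hnpos : (0 : ℝ) < (n : ℝ) := by linarith
  have hsum_nonneg : 0 ≤ ∑ k ∈ Finset.Icc 1 (2 * n ^ 2), fconv k g :=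
    Finset.sum_nonneg fun k hk => hfc k (Finset.mem_Icc.mp hk).1 g
  by_cases hg : g ∈ B (n : ℝ)
  · rw [indicator_of_mem hg]
    set A : ℝ := 2 * 3 ^ d * c₂ * (n : ℝ) ^ d with hA
    have hApos : 0 < A := by positivity
    have hBnfin := hBne (n : ℝ) hn1
    have hBnlb : c₁ * (n : ℝ) ^ d ≤ (m (B (n : ℝ))).toReal :=
      le_trans (hlower n hn) (ENNReal.toReal_mono hBnfin (measure_mono (hsubB n n le_rfl)))
    have hBnpos : 0 < (m (B (n : ℝ))).toReal := lt_of_lt_of_le (by positivity) hBnlb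
    have hn2 : 1 ≤ n ^ 2 := Nat.one_le_pow _ _ (by omega)
    have hkey : ∀ k ∈ Finset.Icc (n ^ 2) (2 * n ^ 2),
        c * Real.exp (-1) / A ≤ fconv k g := by
      intro k hk
      obtain ⟨hk1, hk2⟩ := Finset.mem_Icc.mp hk
      have hkk1 : 1 ≤ k := le_trans hn2 hk1
      have hk1' : ((n : ℝ)) ^ 2 ≤ (k : ℝ) := by exact_mod_cast hk1
      have hk2' : (k : ℝ) ≤ 2 * (n : ℝ) ^ 2 := by exact_mod_cast hk2
      have hkpos : (1 : ℝ) ≤ (k : ℝ) := by exact_mod_cast hkk1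
      have hDg : (D g : ℝ) ≤ (n : ℝ) := by rw [hB] at hg; exact hg
      have hgBk : g ∈ B (k : ℝ) := by
        rw [hB]
        have : (n : ℝ) ≤ (n : ℝ) ^ 2 := by nlinarith
        exact le_trans hDg (le_trans this hk1')
      have hgauss' := hgauss k hkk1 g hgBk
      have hsq1 : 1 ≤ Real.sqrt (k : ℝ) := by
        rw [show (1 : ℝ) = Real.sqrt 1 from (Real.sqrt_one).symm]
        exact Real.sqrt_le_sqrt hkpos
      set mk := ⌊Real.sqrt (k : ℝ)⌋₊ with hmk
      have hmk1 : 1 ≤ mk := Nat.le_floor (by simpa using hsq1)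
      have hmkle : (mk : ℝ) ≤ 2 * (n : ℝ) := by
        have h1 : (mk : ℝ) ≤ Real.sqrt (k : ℝ) := Nat.floor_le (Real.sqrt_nonneg _)
        have h2 : Real.sqrt (k : ℝ) ≤ Real.sqrt (2 * (n : ℝ) ^ 2) := Real.sqrt_le_sqrt hk2'
        have h3 : Real.sqrt (2 * (n : ℝ) ^ 2) ≤ 2 * (n : ℝ) := by
          have h4 : Real.sqrt (2 * (n : ℝ) ^ 2) ≤ Real.sqrt ((2 * (n : ℝ)) ^ 2) :=
            Real.sqrt_le_sqrt (by nlinarith)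
          rwa [Real.sqrt_sq (by positivity)] at h4
        linarith
      have hMfin := hBne _ hsq1
      have hMlb : 0 < (m (B (Real.sqrt (k : ℝ)))).toReal := by
        have hVsubBk : V ^ 1 ⊆ B (Real.sqrt (k : ℝ)) := hsubB 1 _ (by simpa using hsq1)
        have h1 := hlower 1 le_rfl
        norm_num at h1
        have h2 : (m (V ^ 1)).toReal ≤ (m (B (Real.sqrt (k : ℝ)))).toReal :=
          ENNReal.toReal_mono hMfin (measure_mono hVsubBk)
        rw [pow_one] at h2
        linarith
      have hMub : (m (B (Real.sqrt (k : ℝ)))).toReal ≤ A := by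
        have h1 : (m (B (Real.sqrt (k : ℝ)))).toReal
            ≤ (m (V ^ mk)).toReal + (m (V ^ (mk + 1))).toReal := by
          calc (m (B (Real.sqrt (k : ℝ)))).toReal
              ≤ (m (V ^ mk) + m (V ^ (mk + 1))).toReal :=
                ENNReal.toReal_mono
                  (ENNReal.add_ne_top.mpr ⟨(hfinB _ hmk1).ne, (hfinB _ (by omega)).ne⟩)
                  (hBle _)
            _ = _ := ENNReal.toReal_add (hfinB _ hmk1).ne (hfinB _ (by omega)).ne
        have h2 : (m (V ^ mk)).toReal ≤ c₂ * (mk : ℝ) ^ d := hupper mk hmk1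
        have h3 : (m (V ^ (mk + 1))).toReal ≤ c₂ * ((mk : ℝ) + 1) ^ d := by
          have h := hupper (mk + 1) (by omega)
          push_cast at h
          exact h
        have h4 : (mk : ℝ) ^ d ≤ ((mk : ℝ) + 1) ^ d :=
          pow_le_pow_left₀ (by positivity) (by linarith) d
        have h5 : ((mk : ℝ) + 1) ^ d ≤ (3 * (n : ℝ)) ^ d :=
          pow_le_pow_left₀ (by positivity) (by linarith) d
        have h6 : ((3 : ℝ) * (n : ℝ)) ^ d = 3 ^ d * (n : ℝ) ^ d := mul_pow _ _ _
        have e1 : c₂ * (mk : ℝ) ^ d ≤ c₂ * (3 ^ d * (n : ℝ) ^ d) := by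
          rw [← h6]; exact mul_le_mul_of_nonneg_left (h4.trans h5) hc₂.le
        have e2 : c₂ * ((mk : ℝ) + 1) ^ d ≤ c₂ * (3 ^ d * (n : ℝ) ^ d) := by
          rw [← h6]; exact mul_le_mul_of_nonneg_left h5 hc₂.le
        have hAe : A = 2 * (c₂ * (3 ^ d * (n : ℝ) ^ d)) := by rw [hA]; ring
        linarith
      have hexp : Real.exp (-1) ≤ Real.exp (-((D g : ℝ) ^ 2 / (k : ℝ))) := by
        apply Real.exp_le_exp.mpr
        have hDg2 : (D g : ℝ) ^ 2 ≤ (n : ℝ) ^ 2 := by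
          have := Nat.cast_nonneg (α := ℝ) (D g)
          nlinarith
        have hkpos' : (0 : ℝ) < (k : ℝ) := by linarith
        have hd1 : (D g : ℝ) ^ 2 / (k : ℝ) ≤ 1 := by
          rw [div_le_one hkpos']
          linarith
        linarith
      calc c * Real.exp (-1) / A
          ≤ c * Real.exp (-1) / (m (B (Real.sqrt (k : ℝ)))).toReal := by
            apply div_le_div_of_nonneg_left (by positivity) hMlb hMub
        _ ≤ c * Real.exp (-((D g : ℝ) ^ 2 / (k : ℝ)))
              / (m (B (Real.sqrt (k : ℝ)))).toReal := by
            gcongr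
        _ ≤ fconv k g := hgauss'
    have hsum : (n : ℝ) ^ 2 * (c * Real.exp (-1) / A)
        ≤ ∑ k ∈ Finset.Icc 1 (2 * n ^ 2), fconv k g := by
      have hsub : Finset.Icc (n ^ 2) (2 * n ^ 2) ⊆ Finset.Icc 1 (2 * n ^ 2) :=
        Finset.Icc_subset_Icc hn2 le_rfl
      have h1 : ∑ k ∈ Finset.Icc (n ^ 2) (2 * n ^ 2), fconv k g
          ≤ ∑ k ∈ Finset.Icc 1 (2 * n ^ 2), fconv k g :=
        Finset.sum_le_sum_of_subset_of_nonneg hsub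
          (fun k hk _ => hfc k (Finset.mem_Icc.mp hk).1 g)
      have h2 := Finset.card_nsmul_le_sum (Finset.Icc (n ^ 2) (2 * n ^ 2))
        (fun k => fconv k g) (c * Real.exp (-1) / A) hkey
      have hcard : (Finset.Icc (n ^ 2) (2 * n ^ 2)).card = n ^ 2 + 1 := by
        rw [Nat.card_Icc]; omega
      rw [hcard, nsmul_eq_mul] at h2
      push_cast at h2
      have hb : 0 ≤ c * Real.exp (-1) / A := by positivity
      have h3 : (n : ℝ) ^ 2 * (c * Real.exp (-1) / A)
          ≤ ((n : ℝ) ^ 2 + 1) * (c * Real.exp (-1) / A) :=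
        mul_le_mul_of_nonneg_right (by linarith) hb
      linarith
    have heq : (4 * 3 ^ d * c₂ * Real.exp 1) / (c * c₁) / (2 * (n : ℝ) ^ 2)
        * ((n : ℝ) ^ 2 * (c * Real.exp (-1) / A)) = 1 / (c₁ * (n : ℝ) ^ d) := by
      rw [hA, Real.exp_neg]
      have hne1 : Real.exp 1 ≠ 0 := Real.exp_ne_zero 1
      have hne2 : c ≠ 0 := hc.ne'
      have hne3 : c₁ ≠ 0 := hc₁.ne'
      have hne4 : c₂ ≠ 0 := hc₂.ne'
      have hne5 : (n : ℝ) ≠ 0 := hnpos.ne'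
      have hne6 : (3 : ℝ) ^ d ≠ 0 := by positivity
      field_simp
      ring
    have hstep1 : 1 / (m (B (n : ℝ))).toReal ≤ 1 / (c₁ * (n : ℝ) ^ d) :=
      one_div_le_one_div_of_le (by positivity) hBnlb
    calc (1 : ℝ) / (m (B (n : ℝ))).toReal ≤ 1 / (c₁ * (n : ℝ) ^ d) := hstep1
      _ = (4 * 3 ^ d * c₂ * Real.exp 1) / (c * c₁) / (2 * (n : ℝ) ^ 2)
            * ((n : ℝ) ^ 2 * (c * Real.exp (-1) / A)) := heq.symm
      _ ≤ (4 * 3 ^ d * c₂ * Real.exp 1) / (c * c₁) / (2 * (n : ℝ) ^ 2)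
            * ∑ k ∈ Finset.Icc 1 (2 * n ^ 2), fconv k g := by
          apply mul_le_mul_of_nonneg_left hsum (by positivity)
  · rw [indicator_of_notMem hg, zero_div]
    exact mul_nonneg (by positivity) hsum_nonneg
end
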